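/- Let Q^A, Q^B : ℕ → ℕ be non-increasing with Q^A(i) ≤ Q^B(i) ≤ N for all i, and fix l ∈ {1,...,N}. Define the addition update: for Π ∈ {A,B}, with I_Π(l) = sup {i : Q^Π(i) ≥ N - l + 1} (0 if empty), set Q̃^Π(i) = Q^Π(i) + 1 if i = I_Π(l) + 1 and Q̃^Π(i) = Q^Π(i) otherwise. Then Q̃^A(i) ≤ Q̃^B(i) for all i ≥ 1. -/

import Mathlib

/-- `Ifun N Q c` is the height of the `c`-th shortest stack:
`sup {i ≥ 1 : Q i ≥ N - c + 1}`, with value `0` if the set is empty. -/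
noncomputable def Ifun (N : ℕ) (Q : ℕ → ℕ) (c : ℕ) : ℕ :=
  sSup {i | 1 ≤ i ∧ N - c + 1 ≤ Q i}

/-- Addition update (no capacity constraint): add an item to the `l`-th shortest
stack, i.e. increment `Q` at index `I(l) + 1`. -/
noncomputable def addQ (N : ℕ) (Q : ℕ → ℕ) (l : ℕ) : ℕ → ℕ :=
  fun i => if i = Ifun N Q l + 1 then Q i + 1 else Q i

/-- Adding an item to the `l`-th shortest stack in both ensembles preserves the
componentwise ordering of the occupancy vectors. -/
theorem stmt_4 (N : ℕ) (QA QB : ℕ → ℕ)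
    (hmA : ∀ i j, i ≤ j → QA j ≤ QA i)
    (hmB : ∀ i j, i ≤ j → QB j ≤ QB i)
    (hAB : ∀ i, QA i ≤ QB i)
    (hbdB : ∀ i, QB i ≤ N)
    (hfinA : ∃ b, QA (b + 1) = 0)
    (hfinB : ∃ b, QB (b + 1) = 0)
    (l : ℕ) (hl1 : 1 ≤ l) (hlN : l ≤ N) :
    ∀ i, 1 ≤ i → addQ N QA l i ≤ addQ N QB l i := by
  obtain ⟨bA, hbA⟩ := hfinA
  obtain ⟨bB, hbB⟩ := hfinB
  have hbddA : BddAbove {i | 1 ≤ i ∧ N - l + 1 ≤ QA i} := by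
    refine ⟨bA, fun x hx => ?_⟩
    by_contra h
    push_neg at h
    have h2 : QA x ≤ QA (bA + 1) := hmA _ _ h
    have hx2 := hx.2
    omega
  have hbddB : BddAbove {i | 1 ≤ i ∧ N - l + 1 ≤ QB i} := by
    refine ⟨bB, fun x hx => ?_⟩
    by_contra h
    push_neg at h
    have h2 : QB x ≤ QB (bB + 1) := hmB _ _ h
    have hx2 := hx.2
    omega
  have hIAB : Ifun N QA l ≤ Ifun N QB l := by
    rcases Set.eq_empty_or_nonempty {i | 1 ≤ i ∧ N - l + 1 ≤ QA i} with he | hne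
    · rw [Ifun, he]; simp [csSup_empty]
    · exact csSup_le_csSup hbddB hne (fun x hx => ⟨hx.1, le_trans hx.2 (hAB x)⟩)
  have key : Ifun N QA l < Ifun N QB l →
      QA (Ifun N QA l + 1) + 1 ≤ QB (Ifun N QA l + 1) := by
    intro hlt
    have hBne : {i | 1 ≤ i ∧ N - l + 1 ≤ QB i}.Nonempty := by
      by_contra h
      rw [Set.not_nonempty_iff_eq_empty] at h
      have : Ifun N QB l = 0 := by rw [Ifun, h]; simp [csSup_empty]
      omega
    have hmem : Ifun N QB l ∈ {i | 1 ≤ i ∧ N - l + 1 ≤ QB i} :=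
      Nat.sSup_mem hBne hbddB
    have hQB : N - l + 1 ≤ QB (Ifun N QA l + 1) :=
      le_trans hmem.2 (hmB _ _ hlt)
    have hQA : QA (Ifun N QA l + 1) < N - l + 1 := by
      by_contra h
      push_neg at h
      have : Ifun N QA l + 1 ≤ Ifun N QA l :=
        le_csSup hbddA ⟨Nat.le_add_left 1 _, h⟩
      omega
    omega
  intro i hi
  unfold addQ
  by_cases hA : i = Ifun N QA l + 1
  · by_cases hB : i = Ifun N QB l + 1
    · rw [if_pos hA, if_pos hB]; exact Nat.succ_le_succ (hAB i)
    · rw [if_pos hA, if_neg hB]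
      subst hA
      exact key (by omega)
  · by_cases hB : i = Ifun N QB l + 1
    · rw [if_neg hA, if_pos hB]; exact le_trans (hAB i) (Nat.le_succ _)
    · rw [if_neg hA, if_neg hB]; exact hAB i
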